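/- arXiv:2302.09756 — 2 statements merged into one kernel-verified Lean document; each statement's English description precedes it below -/
import Mathlib

section
/- (Mean-square contraction of the score around the true nuisance parameter.) Fix θ ∈ ℝ, c₁ > 0, δ > 0. Suppose Y ∈ L²(P), E[(Y − g₀(Z,X))² | X] ≤ c₁ a.s., and let η = (g, m, p) be a nuisance parameter with ε ≤ p(X) ≤ 1 − ε a.s., ‖g(z,X) − g₀(z,X)‖_{P,2} ≤ δ and ‖m(z,X) − m₀(z,X)‖_{P,2} ≤ δ for z ∈ {0,1}, and ‖p(X) − p₀(X)‖_{P,2} ≤ δ. Then ‖ψ(W; θ, η) − ψ(W; θ, η₀)‖_{P,2} ≤ C·δ, where one may take C = (1 + |θ|)·(2 + 2ε^{−2}·(1 + max(√c₁, 1))), a constant depending only on ε, c₁ and |θ|. -/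
open MeasureTheory
open scoped ENNReal NNReal


private lemma aux_rep {α : Type*} [MeasurableSpace α] (μ : Measure α) (f : α → ℝ) :
    eLpNorm f 2 μ = (∫⁻ ω, ENNReal.ofReal ((f ω)^2) ∂μ) ^ ((2:ℝ)⁻¹) := by
  rw [eLpNorm_eq_lintegral_rpow_enorm_toReal two_ne_zero ENNReal.ofNat_ne_top]
  have h2 : ((2:ℝ≥0∞).toReal) = ((2:ℕ):ℝ) := by norm_num
  congr 1
  · exact lintegral_congr fun a => by
      rw [h2, ENNReal.rpow_natCast, Real.enorm_eq_ofReal_abs,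
        ← ENNReal.ofReal_pow (abs_nonneg _), sq_abs]
  · rw [h2]; norm_num

private lemma aux_forward {α : Type*} [MeasurableSpace α] {μ : Measure α} {f : α → ℝ} {c : ℝ}
    (hc : 0 ≤ c) (h : eLpNorm f 2 μ ≤ ENNReal.ofReal c) :
    (∫⁻ ω, ENNReal.ofReal ((f ω)^2) ∂μ) ≤ ENNReal.ofReal (c^2) := by
  have h' := ENNReal.rpow_le_rpow ((aux_rep μ f) ▸ h) (by norm_num : (0:ℝ) ≤ 2)
  calc (∫⁻ ω, ENNReal.ofReal ((f ω)^2) ∂μ)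
      = ((∫⁻ ω, ENNReal.ofReal ((f ω)^2) ∂μ) ^ ((2:ℝ)⁻¹)) ^ (2:ℝ) := by
        rw [← ENNReal.rpow_mul]; norm_num
    _ ≤ (ENNReal.ofReal c) ^ (2:ℝ) := h'
    _ = ENNReal.ofReal (c^2) := by
        rw [ENNReal.ofReal_rpow_of_nonneg hc (by norm_num)]
        norm_num

private lemma aux_backward {α : Type*} [MeasurableSpace α] {μ : Measure α} {f : α → ℝ} {c : ℝ}
    (hc : 0 ≤ c) (h : (∫⁻ ω, ENNReal.ofReal ((f ω)^2) ∂μ) ≤ ENNReal.ofReal (c^2)) :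
    eLpNorm f 2 μ ≤ ENNReal.ofReal c := by
  rw [aux_rep]
  calc (∫⁻ ω, ENNReal.ofReal ((f ω)^2) ∂μ) ^ ((2:ℝ)⁻¹)
      ≤ (ENNReal.ofReal (c^2)) ^ ((2:ℝ)⁻¹) := ENNReal.rpow_le_rpow h (by norm_num)
    _ = ENNReal.ofReal c := by
        rw [ENNReal.ofReal_rpow_of_nonneg (by positivity) (by norm_num)]
        congr 1
        rw [← Real.rpow_natCast c 2, ← Real.rpow_mul hc]
        norm_num

private lemma aux_dom {α : Type*} [MeasurableSpace α] {μ : Measure α} {f h : α → ℝ} {c d : ℝ}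
    (hc : 0 ≤ c) (hae : ∀ᵐ ω ∂μ, |f ω| ≤ c * |h ω|) (hh : eLpNorm h 2 μ ≤ ENNReal.ofReal d) :
    eLpNorm f 2 μ ≤ ENNReal.ofReal (c * d) := by
  have h1 : eLpNorm f 2 μ ≤ eLpNorm (fun ω => c * h ω) 2 μ := by
    refine eLpNorm_mono_ae ?_
    filter_upwards [hae] with ω hω
    simpa [Real.norm_eq_abs, abs_mul, abs_of_nonneg hc] using hω
  have h2 : eLpNorm (fun ω => c * h ω) 2 μ = (‖c‖₊ : ℝ≥0∞) * eLpNorm h 2 μ :=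
    eLpNorm_const_smul c h 2 μ
  calc eLpNorm f 2 μ ≤ (‖c‖₊ : ℝ≥0∞) * eLpNorm h 2 μ := h1.trans_eq h2
    _ ≤ ENNReal.ofReal c * ENNReal.ofReal d := by
        rw [← enorm_eq_nnnorm, Real.enorm_eq_ofReal hc]; exact mul_le_mul_right hh _
    _ = ENNReal.ofReal (c * d) := (ENNReal.ofReal_mul hc).symm

private lemma aux_div1 {a q e : ℝ} (he : 0 < e) (hq : e ≤ q) : |a / q| ≤ e⁻¹ * |a| := by
  have hq0 : 0 < q := lt_of_lt_of_le he hq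
  rw [abs_div, abs_of_pos hq0, div_le_iff₀ hq0]
  have h1 : e⁻¹ * e ≤ e⁻¹ * q := mul_le_mul_of_nonneg_left hq (by positivity)
  rw [inv_mul_cancel₀ (ne_of_gt he)] at h1
  nlinarith [abs_nonneg a]

private lemma aux_div2 {a q r e : ℝ} (he : 0 < e) (hq : e ≤ q) (hr : e ≤ r) :
    |a / (q * r)| ≤ e⁻¹ * (e⁻¹ * |a|) := by
  calc |a / (q * r)| = |(a / q) / r| := by rw [div_div]
    _ ≤ e⁻¹ * |a / q| := aux_div1 he hr
    _ ≤ e⁻¹ * (e⁻¹ * |a|) := mul_le_mul_of_nonneg_left (aux_div1 he hq) (by positivity)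

private lemma aux_memL2_condExp {α : Type*} {m m₀ : MeasurableSpace α}
    {μ : @MeasureTheory.Measure α m₀} [IsFiniteMeasure μ] (hm : m ≤ m₀) {f : α → ℝ}
    (hf : MemLp f 2 μ) : MemLp (μ[f|m]) 2 μ := by
  have hint : Integrable f μ := hf.integrable one_le_two
  have heq : ((condExpL2 ℝ ℝ hm (hf.toLp f) : Lp ℝ 2 μ) : α → ℝ) =ᵐ[μ] μ[f|m] := by
    refine ae_eq_condExp_of_forall_setIntegral_eq hm hint ?_ ?_ ?_
    · intro s _ hμs
      exact integrableOn_condExpL2_of_measure_ne_top hm hμs.ne _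
    · intro s hs hμs
      rw [integral_condExpL2_eq hm (hf.toLp f) hs hμs.ne]
      exact setIntegral_congr_ae (hm s hs) ((hf.coeFn_toLp).mono fun x hx _ => hx)
    · exact aestronglyMeasurable_condExpL2 hm _
  exact (Lp.memLp _).ae_eq heq


set_option maxHeartbeats 2000000 in
/-- Mean-square contraction of the score around the true nuisance parameter:
Fix `θ ∈ ℝ`, `c₁ > 0`, `δ > 0`. If `Y ∈ L²(P)`, `E[(Y − g₀(Z,X))² | X] ≤ c₁` a.s., and
`η = (g, m, p)` satisfies `ε ≤ p(X) ≤ 1 − ε` a.s., `‖g(z,X) − g₀(z,X)‖_{P,2} ≤ δ`,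
`‖m(z,X) − m₀(z,X)‖_{P,2} ≤ δ` for `z ∈ {0,1}`, and `‖p(X) − p₀(X)‖_{P,2} ≤ δ`, then
`‖ψ(W; θ, η) − ψ(W; θ, η₀)‖_{P,2} ≤ C δ` with
`C = (1 + |θ|)(2 + 2ε⁻²(1 + max(√c₁, 1)))`. -/
theorem stmt12
    {Ω 𝒳 : Type*} [MeasurableSpace Ω] [MeasurableSpace 𝒳]
    (P : Measure Ω) [IsProbabilityMeasure P]
    (Y D Z : Ω → ℝ) (X : Ω → 𝒳)
    (hYm : Measurable Y) (hDm : Measurable D) (hZm : Measurable Z) (hXm : Measurable X)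
    (hDval : ∀ ω, D ω = 0 ∨ D ω = 1) (hZval : ∀ ω, Z ω = 0 ∨ Z ω = 1)
    -- the true nuisance parameter η₀ = (g₀, m₀, p₀)
    (g0 m0 : ℝ → 𝒳 → ℝ) (p0 : 𝒳 → ℝ)
    (hg0m : Measurable (Function.uncurry g0)) (hm0m : Measurable (Function.uncurry m0))
    (hp0m : Measurable p0)
    (hp0val : ∀ x, 0 < p0 x ∧ p0 x < 1)
    (hcY : P[Y | MeasurableSpace.comap (fun ω => (Z ω, X ω)) inferInstance]
        =ᵐ[P] fun ω => g0 (Z ω) (X ω))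
    (hcD : P[D | MeasurableSpace.comap (fun ω => (Z ω, X ω)) inferInstance]
        =ᵐ[P] fun ω => m0 (Z ω) (X ω))
    (hcZ : P[Z | MeasurableSpace.comap X inferInstance] =ᵐ[P] fun ω => p0 (X ω))
    (ε : ℝ) (hε : ε ∈ Set.Ioo (0 : ℝ) (1 / 2))
    (hp0bd : ∀ᵐ ω ∂P, ε ≤ p0 (X ω) ∧ p0 (X ω) ≤ 1 - ε)
    (θ : ℝ) (c₁ δ : ℝ) (hc₁ : 0 < c₁) (hδ : 0 < δ)
    (hY2 : MemLp Y 2 P)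
    (hcondvar : ∀ᵐ ω ∂P,
      (P[fun ω' => (Y ω' - g0 (Z ω') (X ω')) ^ 2 | MeasurableSpace.comap X inferInstance]) ω
        ≤ c₁)
    -- the nuisance parameter η = (g, m, p)
    (g m : ℝ → 𝒳 → ℝ) (p : 𝒳 → ℝ)
    (hgm : Measurable (Function.uncurry g)) (hmm : Measurable (Function.uncurry m))
    (hpm : Measurable p)
    (hpval : ∀ x, 0 < p x ∧ p x < 1)
    (hpbd : ∀ᵐ ω ∂P, ε ≤ p (X ω) ∧ p (X ω) ≤ 1 - ε)
    (hgd1 : eLpNorm (fun ω => g 1 (X ω) - g0 1 (X ω)) 2 P ≤ ENNReal.ofReal δ)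
    (hgd0 : eLpNorm (fun ω => g 0 (X ω) - g0 0 (X ω)) 2 P ≤ ENNReal.ofReal δ)
    (hmd1 : eLpNorm (fun ω => m 1 (X ω) - m0 1 (X ω)) 2 P ≤ ENNReal.ofReal δ)
    (hmd0 : eLpNorm (fun ω => m 0 (X ω) - m0 0 (X ω)) 2 P ≤ ENNReal.ofReal δ)
    (hpd : eLpNorm (fun ω => p (X ω) - p0 (X ω)) 2 P ≤ ENNReal.ofReal δ)
    -- the AR-type score as a function of the nuisance parameter
    (ψ : (ℝ → 𝒳 → ℝ) → (ℝ → 𝒳 → ℝ) → (𝒳 → ℝ) → Ω → ℝ)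
    (hψ : ∀ (g' m' : ℝ → 𝒳 → ℝ) (p' : 𝒳 → ℝ) (ω : Ω), ψ g' m' p' ω =
      g' 1 (X ω) - g' 0 (X ω)
        + Z ω * (Y ω - g' 1 (X ω)) / p' (X ω)
        - (1 - Z ω) * (Y ω - g' 0 (X ω)) / (1 - p' (X ω))
        - θ * (m' 1 (X ω) - m' 0 (X ω)
            + Z ω * (D ω - m' 1 (X ω)) / p' (X ω)
            - (1 - Z ω) * (D ω - m' 0 (X ω)) / (1 - p' (X ω)))) :
    eLpNorm (fun ω => ψ g m p ω - ψ g0 m0 p0 ω) 2 P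
      ≤ ENNReal.ofReal
          ((1 + |θ|) * (2 + 2 * ε ^ (-2 : ℝ) * (1 + max (Real.sqrt c₁) 1)) * δ) := by
  
  obtain ⟨hε0, hεh⟩ := hε
  -- basic measurability
  have hXc : Measurable[MeasurableSpace.comap X inferInstance] X :=
    Measurable.of_comap_le le_rfl
  have hmX : MeasurableSpace.comap X inferInstance ≤ _ := hXm.comap_le
  have hmZX : MeasurableSpace.comap (fun ω => (Z ω, X ω)) inferInstance ≤ _ :=
    (hZm.prodMk hXm).comap_le
  have mp : Measurable fun ω => p (X ω) := hpm.comp hXm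
  have mp0 : Measurable fun ω => p0 (X ω) := hp0m.comp hXm
  have mg1 : Measurable fun ω => g 1 (X ω) := hgm.comp (measurable_const.prodMk hXm)
  have mg0x : Measurable fun ω => g 0 (X ω) := hgm.comp (measurable_const.prodMk hXm)
  have mg01 : Measurable fun ω => g0 1 (X ω) := hg0m.comp (measurable_const.prodMk hXm)
  have mg00 : Measurable fun ω => g0 0 (X ω) := hg0m.comp (measurable_const.prodMk hXm)
  have mm1 : Measurable fun ω => m 1 (X ω) := hmm.comp (measurable_const.prodMk hXm)
  have mm0x : Measurable fun ω => m 0 (X ω) := hmm.comp (measurable_const.prodMk hXm)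
  have mm01 : Measurable fun ω => m0 1 (X ω) := hm0m.comp (measurable_const.prodMk hXm)
  have mm00 : Measurable fun ω => m0 0 (X ω) := hm0m.comp (measurable_const.prodMk hXm)
  have mg0Z : Measurable fun ω => g0 (Z ω) (X ω) := hg0m.comp (hZm.prodMk hXm)
  -- |D - m0(Z,X)| ≤ 1 a.e.
  have hDbd : ∀ᵐ ω ∂P, |D ω - m0 (Z ω) (X ω)| ≤ 1 := by
    have hDint : Integrable D P := by
      refine memLp_one_iff_integrable.mp (MemLp.of_bound hDm.aestronglyMeasurable 1 ?_)
      exact Filter.Eventually.of_forall fun ω => by rcases hDval ω with h | h <;> simp [h]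
    have h0 : 0 ≤ᵐ[P] P[D|MeasurableSpace.comap (fun ω => (Z ω, X ω)) inferInstance] :=
      condExp_nonneg (Filter.Eventually.of_forall fun ω => by
        rcases hDval ω with h | h <;> simp [h])
    have h1 : P[D|MeasurableSpace.comap (fun ω => (Z ω, X ω)) inferInstance]
        ≤ᵐ[P] P[(fun _ => (1:ℝ))|MeasurableSpace.comap (fun ω => (Z ω, X ω)) inferInstance] :=
      condExp_mono hDint (integrable_const 1) (Filter.Eventually.of_forall fun ω => by
        rcases hDval ω with h | h <;> simp [h])
    rw [condExp_const hmZX (1:ℝ)] at h1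
    filter_upwards [hcD, h0, h1] with ω he h0ω h1ω
    rw [← he]
    simp only [Pi.zero_apply] at h0ω
    rcases hDval ω with h | h <;> rw [h, abs_le] <;> constructor <;> linarith
  -- key bound: ‖(Y - g0(Z,X))·(p(X) - p0(X))‖₂ ≤ √c₁ · δ
  have hDpbd : ∀ ω, |p (X ω) - p0 (X ω)| ≤ 1 := fun ω => by
    rcases hpval (X ω) with ⟨a1, a2⟩
    rcases hp0val (X ω) with ⟨b1, b2⟩
    rw [abs_le]; constructor <;> linarith
  have hDpM : Measurable fun ω => p (X ω) - p0 (X ω) := mp.sub mp0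
  have hDp2 : MemLp (fun ω => p (X ω) - p0 (X ω)) 2 P := by
    refine MemLp.of_bound hDpM.aestronglyMeasurable 1 ?_
    exact Filter.Eventually.of_forall fun ω => by rw [Real.norm_eq_abs]; exact hDpbd ω
  have hf2int : Integrable (fun ω => (p (X ω) - p0 (X ω))^2) P := hDp2.integrable_sq
  have hf2sm : StronglyMeasurable[MeasurableSpace.comap X inferInstance]
      (fun ω => (p (X ω) - p0 (X ω))^2) :=
    (((hpm.comp hXc).sub (hp0m.comp hXc)).pow_const 2).stronglyMeasurable
  have hf2bd : ∀ ω, ‖(p (X ω) - p0 (X ω))^2‖ ≤ 1 := fun ω => by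
    have := hDpbd ω
    rw [Real.norm_eq_abs, abs_of_nonneg (sq_nonneg _)]
    nlinarith [sq_abs (p (X ω) - p0 (X ω)), abs_nonneg (p (X ω) - p0 (X ω))]
  have hg0Z2 : MemLp (fun ω => g0 (Z ω) (X ω)) 2 P :=
    (aux_memL2_condExp hmZX hY2).ae_eq hcY
  have hYg : MemLp (fun ω => Y ω - g0 (Z ω) (X ω)) 2 P := hY2.sub hg0Z2
  have hg2int : Integrable (fun ω => (Y ω - g0 (Z ω) (X ω))^2) P := hYg.integrable_sq
  have hfg_int : Integrable
      (fun ω => (p (X ω) - p0 (X ω))^2 * (Y ω - g0 (Z ω) (X ω))^2) P :=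
    hg2int.bdd_mul ((hf2sm.mono hmX).aestronglyMeasurable) (Filter.Eventually.of_forall hf2bd)
  have hpull : P[(fun ω => (p (X ω) - p0 (X ω))^2 * (Y ω - g0 (Z ω) (X ω))^2)|MeasurableSpace.comap X inferInstance] =ᵐ[P] fun ω => (p (X ω) - p0 (X ω))^2 * (P[(fun ω' => (Y ω' - g0 (Z ω') (X ω'))^2)|MeasurableSpace.comap X inferInstance]) ω :=
    condExp_mul_of_stronglyMeasurable_left hf2sm hfg_int hg2int
  have hKint2 : ∫ ω, (p (X ω) - p0 (X ω))^2 * (Y ω - g0 (Z ω) (X ω))^2 ∂P ≤ c₁ * δ^2 := by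
    have step1 : ∫ ω, (p (X ω) - p0 (X ω))^2 * (Y ω - g0 (Z ω) (X ω))^2 ∂P = ∫ ω, (p (X ω) - p0 (X ω))^2 * (P[(fun ω' => (Y ω' - g0 (Z ω') (X ω'))^2)|MeasurableSpace.comap X inferInstance]) ω ∂P := by
      rw [← integral_condExp hmX]
      exact integral_congr_ae hpull
    have step2 : ∫ ω, (p (X ω) - p0 (X ω))^2 * (P[(fun ω' => (Y ω' - g0 (Z ω') (X ω'))^2)|MeasurableSpace.comap X inferInstance]) ω ∂P ≤ ∫ ω, c₁ * (p (X ω) - p0 (X ω))^2 ∂P := by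
      refine integral_mono_ae
        (integrable_condExp.bdd_mul ((hf2sm.mono hmX).aestronglyMeasurable) (Filter.Eventually.of_forall hf2bd))
        (hf2int.const_mul c₁) ?_
      filter_upwards [hcondvar] with ω hω
      rw [mul_comm c₁]
      exact mul_le_mul_of_nonneg_left hω (sq_nonneg _)
    have step3 : ∫ ω, c₁ * (p (X ω) - p0 (X ω))^2 ∂P ≤ c₁ * δ^2 := by
      rw [integral_const_mul]
      refine mul_le_mul_of_nonneg_left ?_ hc₁.le
      have h1 : ∫⁻ ω, ENNReal.ofReal ((p (X ω) - p0 (X ω))^2) ∂P ≤ ENNReal.ofReal (δ^2) :=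
        aux_forward hδ.le hpd
      have h2 : ∫ ω, (p (X ω) - p0 (X ω))^2 ∂P
          = (∫⁻ ω, ENNReal.ofReal ((p (X ω) - p0 (X ω))^2) ∂P).toReal :=
        integral_eq_lintegral_of_nonneg_ae (Filter.Eventually.of_forall fun ω => sq_nonneg _)
          (hDpM.pow_const 2).aestronglyMeasurable
      rw [h2]
      calc (∫⁻ ω, ENNReal.ofReal ((p (X ω) - p0 (X ω))^2) ∂P).toReal
          ≤ (ENNReal.ofReal (δ^2)).toReal := ENNReal.toReal_mono (by simp) h1
        _ = δ^2 := ENNReal.toReal_ofReal (by positivity)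
    linarith [step1, step2, step3]
  have hKbd : eLpNorm (fun ω => (Y ω - g0 (Z ω) (X ω)) * (p (X ω) - p0 (X ω))) 2 P
      ≤ ENNReal.ofReal (Real.sqrt c₁ * δ) := by
    refine aux_backward (by positivity) ?_
    have he : ENNReal.ofReal ((Real.sqrt c₁ * δ)^2) = ENNReal.ofReal (c₁ * δ^2) := by
      rw [mul_pow, Real.sq_sqrt hc₁.le]
    rw [he]
    have hK2int : Integrable
        (fun ω => ((Y ω - g0 (Z ω) (X ω)) * (p (X ω) - p0 (X ω)))^2) P :=
      hfg_int.congr (Filter.Eventually.of_forall fun ω => by ring)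
    have heq2 : ∫⁻ ω, ENNReal.ofReal (((Y ω - g0 (Z ω) (X ω)) * (p (X ω) - p0 (X ω)))^2) ∂P
        = ENNReal.ofReal (∫ ω, ((Y ω - g0 (Z ω) (X ω)) * (p (X ω) - p0 (X ω)))^2 ∂P) :=
      (ofReal_integral_eq_lintegral_ofReal hK2int
        (Filter.Eventually.of_forall fun ω => sq_nonneg _)).symm
    rw [heq2]
    refine ENNReal.ofReal_le_ofReal ?_
    calc ∫ ω, ((Y ω - g0 (Z ω) (X ω)) * (p (X ω) - p0 (X ω)))^2 ∂P
        = ∫ ω, (p (X ω) - p0 (X ω))^2 * (Y ω - g0 (Z ω) (X ω))^2 ∂P :=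
          integral_congr_ae (Filter.Eventually.of_forall fun ω => by ring)
      _ ≤ c₁ * δ^2 := hKint2
    -- pointwise decomposition of the score difference
  have hdecomp : (fun ω => ψ g m p ω - ψ g0 m0 p0 ω) = fun ω =>
      g 1 (X ω) - g0 1 (X ω) + -(g 0 (X ω) - g0 0 (X ω)) + Z ω * (Y ω - g0 1 (X ω)) * (p0 (X ω) - p (X ω)) / (p (X ω) * p0 (X ω)) + -(Z ω * (g 1 (X ω) - g0 1 (X ω)) / p (X ω)) + -((1 - Z ω) * (Y ω - g0 0 (X ω)) * (p (X ω) - p0 (X ω)) / ((1 - p (X ω)) * (1 - p0 (X ω)))) + (1 - Z ω) * (g 0 (X ω) - g0 0 (X ω)) / (1 - p (X ω)) + (-θ) * (m 1 (X ω) - m0 1 (X ω) + -(m 0 (X ω) - m0 0 (X ω)) + Z ω * (D ω - m0 1 (X ω)) * (p0 (X ω) - p (X ω)) / (p (X ω) * p0 (X ω)) + -(Z ω * (m 1 (X ω) - m0 1 (X ω)) / p (X ω)) + -((1 - Z ω) * (D ω - m0 0 (X ω)) * (p (X ω) - p0 (X ω)) / ((1 - p (X ω)) * (1 - p0 (X ω))))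 + (1 - Z ω) * (m 0 (X ω) - m0 0 (X ω)) / (1 - p (X ω))) := by
    funext ω
    have h1 : p (X ω) ≠ 0 := ne_of_gt (hpval (X ω)).1
    have h2 : p0 (X ω) ≠ 0 := ne_of_gt (hp0val (X ω)).1
    have h3 : (1:ℝ) - p (X ω) ≠ 0 := ne_of_gt (by linarith [(hpval (X ω)).2])
    have h4 : (1:ℝ) - p0 (X ω) ≠ 0 := ne_of_gt (by linarith [(hp0val (X ω)).2])
    rw [hψ, hψ]
    field_simp
    ring
  -- individual bounds
  have hb1 : eLpNorm (fun ω => g 1 (X ω) - g0 1 (X ω)) 2 P ≤ ENNReal.ofReal δ := hgd1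
  have hb2 : eLpNorm (fun ω => -(g 0 (X ω) - g0 0 (X ω))) 2 P ≤ ENNReal.ofReal δ :=
    (eLpNorm_neg (fun ω => g 0 (X ω) - g0 0 (X ω)) 2 P).le.trans hgd0
  have hb3 : eLpNorm (fun ω => Z ω * (Y ω - g0 1 (X ω)) * (p0 (X ω) - p (X ω)) / (p (X ω) * p0 (X ω))) 2 P ≤ ENNReal.ofReal (ε⁻¹ * ε⁻¹ * (Real.sqrt c₁ * δ)) := by
    refine aux_dom (by positivity) ?_ hKbd
    filter_upwards [hpbd, hp0bd] with ω hb hb0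
    rcases hZval ω with h | h
    · rw [h]
      simp only [zero_mul, zero_div, abs_zero]
      positivity
    · rw [h]
      calc |1 * (Y ω - g0 1 (X ω)) * (p0 (X ω) - p (X ω)) / (p (X ω) * p0 (X ω))|
          ≤ ε⁻¹ * (ε⁻¹ * |1 * (Y ω - g0 1 (X ω)) * (p0 (X ω) - p (X ω))|) :=
            aux_div2 hε0 hb.1 hb0.1
        _ = ε⁻¹ * ε⁻¹ * |(Y ω - g0 1 (X ω)) * (p (X ω) - p0 (X ω))| := by
            rw [one_mul, ← mul_assoc, abs_mul, abs_mul, abs_sub_comm (p0 (X ω))]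
  have hb4 : eLpNorm (fun ω => -(Z ω * (g 1 (X ω) - g0 1 (X ω)) / p (X ω))) 2 P ≤ ENNReal.ofReal (ε⁻¹ * δ) := by
    refine aux_dom (by positivity) ?_ hgd1
    filter_upwards [hpbd] with ω hb
    rcases hZval ω with h | h
    · rw [h]
      simp only [zero_mul, zero_div, neg_zero, abs_zero]
      positivity
    · rw [h, abs_neg, one_mul]
      exact aux_div1 hε0 hb.1
  have hb5 : eLpNorm (fun ω => -((1 - Z ω) * (Y ω - g0 0 (X ω)) * (p (X ω) - p0 (X ω)) / ((1 - p (X ω)) * (1 - p0 (X ω))))) 2 P ≤ ENNReal.ofReal (ε⁻¹ * ε⁻¹ * (Real.sqrt c₁ * δ)) := by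
    refine aux_dom (by positivity) ?_ hKbd
    filter_upwards [hpbd, hp0bd] with ω hb hb0
    rcases hZval ω with h | h
    · rw [h, abs_neg]
      have h3 : ε ≤ 1 - p (X ω) := by linarith [hb.2]
      have h4 : ε ≤ 1 - p0 (X ω) := by linarith [hb0.2]
      calc |(1 - 0) * (Y ω - g0 0 (X ω)) * (p (X ω) - p0 (X ω)) / ((1 - p (X ω)) * (1 - p0 (X ω)))|
          ≤ ε⁻¹ * (ε⁻¹ * |(1 - 0) * (Y ω - g0 0 (X ω)) * (p (X ω) - p0 (X ω))|) :=
            aux_div2 hε0 h3 h4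
        _ = ε⁻¹ * ε⁻¹ * |(Y ω - g0 0 (X ω)) * (p (X ω) - p0 (X ω))| := by
            rw [sub_zero, one_mul, ← mul_assoc]
    · rw [h]
      simp only [sub_self, zero_mul, zero_div, neg_zero, abs_zero]
      positivity
  have hb6 : eLpNorm (fun ω => (1 - Z ω) * (g 0 (X ω) - g0 0 (X ω)) / (1 - p (X ω))) 2 P ≤ ENNReal.ofReal (ε⁻¹ * δ) := by
    refine aux_dom (by positivity) ?_ hgd0
    filter_upwards [hpbd] with ω hb
    rcases hZval ω with h | h
    · rw [h, sub_zero, one_mul]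
      exact aux_div1 hε0 (by linarith [hb.2])
    · rw [h]
      simp only [sub_self, zero_mul, zero_div, abs_zero]
      positivity
  have hs1 : eLpNorm (fun ω => m 1 (X ω) - m0 1 (X ω)) 2 P ≤ ENNReal.ofReal δ := hmd1
  have hs2 : eLpNorm (fun ω => -(m 0 (X ω) - m0 0 (X ω))) 2 P ≤ ENNReal.ofReal δ :=
    (eLpNorm_neg (fun ω => m 0 (X ω) - m0 0 (X ω)) 2 P).le.trans hmd0
  have hs3 : eLpNorm (fun ω => Z ω * (D ω - m0 1 (X ω)) * (p0 (X ω) - p (X ω)) / (p (X ω) * p0 (X ω))) 2 P ≤ ENNReal.ofReal (ε⁻¹ * ε⁻¹ * δ) := by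
    refine aux_dom (by positivity) ?_ hpd
    filter_upwards [hpbd, hp0bd, hDbd] with ω hb hb0 hd
    rcases hZval ω with h | h
    · rw [h]
      simp only [zero_mul, zero_div, abs_zero]
      positivity
    · rw [h] at hd ⊢
      calc |1 * (D ω - m0 1 (X ω)) * (p0 (X ω) - p (X ω)) / (p (X ω) * p0 (X ω))|
          ≤ ε⁻¹ * (ε⁻¹ * |1 * (D ω - m0 1 (X ω)) * (p0 (X ω) - p (X ω))|) :=
            aux_div2 hε0 hb.1 hb0.1
        _ ≤ ε⁻¹ * ε⁻¹ * |p (X ω) - p0 (X ω)| := by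
            rw [one_mul, ← mul_assoc, abs_mul, abs_sub_comm (p0 (X ω))]
            exact mul_le_mul_of_nonneg_left
              ((mul_le_mul_of_nonneg_right hd (abs_nonneg _)).trans_eq (one_mul _))
              (by positivity)
  have hs4 : eLpNorm (fun ω => -(Z ω * (m 1 (X ω) - m0 1 (X ω)) / p (X ω))) 2 P ≤ ENNReal.ofReal (ε⁻¹ * δ) := by
    refine aux_dom (by positivity) ?_ hmd1
    filter_upwards [hpbd] with ω hb
    rcases hZval ω with h | h
    · rw [h]
      simp only [zero_mul, zero_div, neg_zero, abs_zero]
      positivity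
    · rw [h, abs_neg, one_mul]
      exact aux_div1 hε0 hb.1
  have hs5 : eLpNorm (fun ω => -((1 - Z ω) * (D ω - m0 0 (X ω)) * (p (X ω) - p0 (X ω)) / ((1 - p (X ω)) * (1 - p0 (X ω))))) 2 P ≤ ENNReal.ofReal (ε⁻¹ * ε⁻¹ * δ) := by
    refine aux_dom (by positivity) ?_ hpd
    filter_upwards [hpbd, hp0bd, hDbd] with ω hb hb0 hd
    rcases hZval ω with h | h
    · rw [h] at hd ⊢
      rw [abs_neg]
      have h3 : ε ≤ 1 - p (X ω) := by linarith [hb.2]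
      have h4 : ε ≤ 1 - p0 (X ω) := by linarith [hb0.2]
      calc |(1 - 0) * (D ω - m0 0 (X ω)) * (p (X ω) - p0 (X ω)) / ((1 - p (X ω)) * (1 - p0 (X ω)))|
          ≤ ε⁻¹ * (ε⁻¹ * |(1 - 0) * (D ω - m0 0 (X ω)) * (p (X ω) - p0 (X ω))|) :=
            aux_div2 hε0 h3 h4
        _ ≤ ε⁻¹ * ε⁻¹ * |p (X ω) - p0 (X ω)| := by
            rw [sub_zero, one_mul, ← mul_assoc, abs_mul]
            exact mul_le_mul_of_nonneg_left
              ((mul_le_mul_of_nonneg_right hd (abs_nonneg _)).trans_eq (one_mul _))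
              (by positivity)
    · rw [h]
      simp only [sub_self, zero_mul, zero_div, neg_zero, abs_zero]
      positivity
  have hs6 : eLpNorm (fun ω => (1 - Z ω) * (m 0 (X ω) - m0 0 (X ω)) / (1 - p (X ω))) 2 P ≤ ENNReal.ofReal (ε⁻¹ * δ) := by
    refine aux_dom (by positivity) ?_ hmd0
    filter_upwards [hpbd] with ω hb
    rcases hZval ω with h | h
    · rw [h, sub_zero, one_mul]
      exact aux_div1 hε0 (by linarith [hb.2])
    · rw [h]
      simp only [sub_self, zero_mul, zero_div, abs_zero]
      positivity
  -- measurability of the terms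
  have aT1 : AEStronglyMeasurable (fun ω => g 1 (X ω) - g0 1 (X ω)) P := (mg1.sub mg01).aestronglyMeasurable
  have aT2 : AEStronglyMeasurable (fun ω => -(g 0 (X ω) - g0 0 (X ω))) P := ((mg0x.sub mg00).neg).aestronglyMeasurable
  have aT3 : AEStronglyMeasurable (fun ω => Z ω * (Y ω - g0 1 (X ω)) * (p0 (X ω) - p (X ω)) / (p (X ω) * p0 (X ω))) P :=
    (((hZm.mul (hYm.sub mg01)).mul (mp0.sub mp)).div (mp.mul mp0)).aestronglyMeasurable
  have aT4 : AEStronglyMeasurable (fun ω => -(Z ω * (g 1 (X ω) - g0 1 (X ω)) / p (X ω))) P :=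
    (((hZm.mul (mg1.sub mg01)).div mp).neg).aestronglyMeasurable
  have aT5 : AEStronglyMeasurable (fun ω => -((1 - Z ω) * (Y ω - g0 0 (X ω)) * (p (X ω) - p0 (X ω)) / ((1 - p (X ω)) * (1 - p0 (X ω))))) P :=
    (((((measurable_const.sub hZm).mul (hYm.sub mg00)).mul (mp.sub mp0)).div
      ((measurable_const.sub mp).mul (measurable_const.sub mp0))).neg).aestronglyMeasurable
  have aT6 : AEStronglyMeasurable (fun ω => (1 - Z ω) * (g 0 (X ω) - g0 0 (X ω)) / (1 - p (X ω))) P :=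
    (((measurable_const.sub hZm).mul (mg0x.sub mg00)).div
      (measurable_const.sub mp)).aestronglyMeasurable
  have aS1 : AEStronglyMeasurable (fun ω => m 1 (X ω) - m0 1 (X ω)) P := (mm1.sub mm01).aestronglyMeasurable
  have aS2 : AEStronglyMeasurable (fun ω => -(m 0 (X ω) - m0 0 (X ω))) P := ((mm0x.sub mm00).neg).aestronglyMeasurable
  have aS3 : AEStronglyMeasurable (fun ω => Z ω * (D ω - m0 1 (X ω)) * (p0 (X ω) - p (X ω)) / (p (X ω) * p0 (X ω))) P :=
    (((hZm.mul (hDm.sub mm01)).mul (mp0.sub mp)).div (mp.mul mp0)).aestronglyMeasurable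
  have aS4 : AEStronglyMeasurable (fun ω => -(Z ω * (m 1 (X ω) - m0 1 (X ω)) / p (X ω))) P :=
    (((hZm.mul (mm1.sub mm01)).div mp).neg).aestronglyMeasurable
  have aS5 : AEStronglyMeasurable (fun ω => -((1 - Z ω) * (D ω - m0 0 (X ω)) * (p (X ω) - p0 (X ω)) / ((1 - p (X ω)) * (1 - p0 (X ω))))) P :=
    (((((measurable_const.sub hZm).mul (hDm.sub mm00)).mul (mp.sub mp0)).div
      ((measurable_const.sub mp).mul (measurable_const.sub mp0))).neg).aestronglyMeasurable
  have aS6 : AEStronglyMeasurable (fun ω => (1 - Z ω) * (m 0 (X ω) - m0 0 (X ω)) / (1 - p (X ω))) P :=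
    (((measurable_const.sub hZm).mul (mm0x.sub mm00)).div
      (measurable_const.sub mp)).aestronglyMeasurable
  -- triangle inequality helper
  have tri : ∀ {f₁ f₂ : Ω → ℝ} {a b : ℝ}, AEStronglyMeasurable f₁ P →
      AEStronglyMeasurable f₂ P → 0 ≤ a → 0 ≤ b → eLpNorm f₁ 2 P ≤ ENNReal.ofReal a →
      eLpNorm f₂ 2 P ≤ ENNReal.ofReal b →
      eLpNorm (fun ω => f₁ ω + f₂ ω) 2 P ≤ ENNReal.ofReal (a + b) := by
    intro f₁ f₂ a b h₁ h₂ ha hb hea heb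
    rw [ENNReal.ofReal_add ha hb]
    exact (eLpNorm_add_le h₁ h₂ one_le_two).trans (add_le_add hea heb)
  -- assemble the T-side
  have hA2 : eLpNorm (fun ω => g 1 (X ω) - g0 1 (X ω) + -(g 0 (X ω) - g0 0 (X ω))) 2 P ≤ ENNReal.ofReal (δ + δ) :=
    tri aT1 aT2 (by positivity) (by positivity) hb1 hb2
  have hA3 : eLpNorm (fun ω => g 1 (X ω) - g0 1 (X ω) + -(g 0 (X ω) - g0 0 (X ω)) + Z ω * (Y ω - g0 1 (X ω)) * (p0 (X ω) - p (X ω)) / (p (X ω) * p0 (X ω))) 2 P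
      ≤ ENNReal.ofReal (δ + δ + ε⁻¹ * ε⁻¹ * (Real.sqrt c₁ * δ)) :=
    tri (aT1.add aT2) aT3 (by positivity) (by positivity) hA2 hb3
  have hA4 : eLpNorm (fun ω => g 1 (X ω) - g0 1 (X ω) + -(g 0 (X ω) - g0 0 (X ω)) + Z ω * (Y ω - g0 1 (X ω)) * (p0 (X ω) - p (X ω)) / (p (X ω) * p0 (X ω)) + -(Z ω * (g 1 (X ω) - g0 1 (X ω)) / p (X ω))) 2 P
      ≤ ENNReal.ofReal (δ + δ + ε⁻¹ * ε⁻¹ * (Real.sqrt c₁ * δ) + ε⁻¹ * δ) :=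
    tri ((aT1.add aT2).add aT3) aT4 (by positivity) (by positivity) hA3 hb4
  have hA5 : eLpNorm (fun ω => g 1 (X ω) - g0 1 (X ω) + -(g 0 (X ω) - g0 0 (X ω)) + Z ω * (Y ω - g0 1 (X ω)) * (p0 (X ω) - p (X ω)) / (p (X ω) * p0 (X ω)) + -(Z ω * (g 1 (X ω) - g0 1 (X ω)) / p (X ω)) + -((1 - Z ω) * (Y ω - g0 0 (X ω)) * (p (X ω) - p0 (X ω)) / ((1 - p (X ω)) * (1 - p0 (X ω))))) 2 P
      ≤ ENNReal.ofReal (δ + δ + ε⁻¹ * ε⁻¹ * (Real.sqrt c₁ * δ) + ε⁻¹ * δ + ε⁻¹ * ε⁻¹ * (Real.sqrt c₁ * δ)) :=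
    tri (((aT1.add aT2).add aT3).add aT4) aT5 (by positivity) (by positivity) hA4 hb5
  have hA6 : eLpNorm (fun ω => g 1 (X ω) - g0 1 (X ω) + -(g 0 (X ω) - g0 0 (X ω)) + Z ω * (Y ω - g0 1 (X ω)) * (p0 (X ω) - p (X ω)) / (p (X ω) * p0 (X ω)) + -(Z ω * (g 1 (X ω) - g0 1 (X ω)) / p (X ω)) + -((1 - Z ω) * (Y ω - g0 0 (X ω)) * (p (X ω) - p0 (X ω)) / ((1 - p (X ω)) * (1 - p0 (X ω)))) + (1 - Z ω) * (g 0 (X ω) - g0 0 (X ω)) / (1 - p (X ω))) 2 P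
      ≤ ENNReal.ofReal (δ + δ + ε⁻¹ * ε⁻¹ * (Real.sqrt c₁ * δ) + ε⁻¹ * δ + ε⁻¹ * ε⁻¹ * (Real.sqrt c₁ * δ) + ε⁻¹ * δ) :=
    tri ((((aT1.add aT2).add aT3).add aT4).add aT5) aT6 (by positivity) (by positivity) hA5 hb6
  -- assemble the S-side
  have hB2 : eLpNorm (fun ω => m 1 (X ω) - m0 1 (X ω) + -(m 0 (X ω) - m0 0 (X ω))) 2 P ≤ ENNReal.ofReal (δ + δ) :=
    tri aS1 aS2 (by positivity) (by positivity) hs1 hs2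
  have hB3 : eLpNorm (fun ω => m 1 (X ω) - m0 1 (X ω) + -(m 0 (X ω) - m0 0 (X ω)) + Z ω * (D ω - m0 1 (X ω)) * (p0 (X ω) - p (X ω)) / (p (X ω) * p0 (X ω))) 2 P
      ≤ ENNReal.ofReal (δ + δ + ε⁻¹ * ε⁻¹ * δ) :=
    tri (aS1.add aS2) aS3 (by positivity) (by positivity) hB2 hs3
  have hB4 : eLpNorm (fun ω => m 1 (X ω) - m0 1 (X ω) + -(m 0 (X ω) - m0 0 (X ω)) + Z ω * (D ω - m0 1 (X ω)) * (p0 (X ω) - p (X ω)) / (p (X ω) * p0 (X ω)) + -(Z ω * (m 1 (X ω) - m0 1 (X ω)) / p (X ω))) 2 P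
      ≤ ENNReal.ofReal (δ + δ + ε⁻¹ * ε⁻¹ * δ + ε⁻¹ * δ) :=
    tri ((aS1.add aS2).add aS3) aS4 (by positivity) (by positivity) hB3 hs4
  have hB5 : eLpNorm (fun ω => m 1 (X ω) - m0 1 (X ω) + -(m 0 (X ω) - m0 0 (X ω)) + Z ω * (D ω - m0 1 (X ω)) * (p0 (X ω) - p (X ω)) / (p (X ω) * p0 (X ω)) + -(Z ω * (m 1 (X ω) - m0 1 (X ω)) / p (X ω)) + -((1 - Z ω) * (D ω - m0 0 (X ω)) * (p (X ω) - p0 (X ω)) / ((1 - p (X ω)) * (1 - p0 (X ω))))) 2 P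
      ≤ ENNReal.ofReal (δ + δ + ε⁻¹ * ε⁻¹ * δ + ε⁻¹ * δ + ε⁻¹ * ε⁻¹ * δ) :=
    tri (((aS1.add aS2).add aS3).add aS4) aS5 (by positivity) (by positivity) hB4 hs5
  have hB6 : eLpNorm (fun ω => m 1 (X ω) - m0 1 (X ω) + -(m 0 (X ω) - m0 0 (X ω)) + Z ω * (D ω - m0 1 (X ω)) * (p0 (X ω) - p (X ω)) / (p (X ω) * p0 (X ω)) + -(Z ω * (m 1 (X ω) - m0 1 (X ω)) / p (X ω)) + -((1 - Z ω) * (D ω - m0 0 (X ω)) * (p (X ω) - p0 (X ω)) / ((1 - p (X ω)) * (1 - p0 (X ω)))) + (1 - Z ω) * (m 0 (X ω) - m0 0 (X ω)) / (1 - p (X ω))) 2 P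
      ≤ ENNReal.ofReal (δ + δ + ε⁻¹ * ε⁻¹ * δ + ε⁻¹ * δ + ε⁻¹ * ε⁻¹ * δ + ε⁻¹ * δ) :=
    tri ((((aS1.add aS2).add aS3).add aS4).add aS5) aS6 (by positivity) (by positivity) hB5 hs6
  -- scaled S-side
  have hSfinal : eLpNorm (fun ω => (-θ) * (m 1 (X ω) - m0 1 (X ω) + -(m 0 (X ω) - m0 0 (X ω)) + Z ω * (D ω - m0 1 (X ω)) * (p0 (X ω) - p (X ω)) / (p (X ω) * p0 (X ω)) + -(Z ω * (m 1 (X ω) - m0 1 (X ω)) / p (X ω)) + -((1 - Z ω) * (D ω - m0 0 (X ω)) * (p (X ω) - p0 (X ω)) / ((1 - p (X ω)) * (1 - p0 (X ω)))) + (1 - Z ω) * (m 0 (X ω) - m0 0 (X ω)) / (1 - p (X ω)))) 2 P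
      ≤ ENNReal.ofReal (|θ| * (δ + δ + ε⁻¹ * ε⁻¹ * δ + ε⁻¹ * δ + ε⁻¹ * ε⁻¹ * δ + ε⁻¹ * δ)) := by
    have he : eLpNorm (fun ω => (-θ) * (m 1 (X ω) - m0 1 (X ω) + -(m 0 (X ω) - m0 0 (X ω)) + Z ω * (D ω - m0 1 (X ω)) * (p0 (X ω) - p (X ω)) / (p (X ω) * p0 (X ω)) + -(Z ω * (m 1 (X ω) - m0 1 (X ω)) / p (X ω)) + -((1 - Z ω) * (D ω - m0 0 (X ω)) * (p (X ω) - p0 (X ω)) / ((1 - p (X ω)) * (1 - p0 (X ω)))) + (1 - Z ω) * (m 0 (X ω) - m0 0 (X ω)) / (1 - p (X ω)))) 2 P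
        = (‖(-θ)‖₊ : ℝ≥0∞) * eLpNorm (fun ω => m 1 (X ω) - m0 1 (X ω) + -(m 0 (X ω) - m0 0 (X ω)) + Z ω * (D ω - m0 1 (X ω)) * (p0 (X ω) - p (X ω)) / (p (X ω) * p0 (X ω)) + -(Z ω * (m 1 (X ω) - m0 1 (X ω)) / p (X ω)) + -((1 - Z ω) * (D ω - m0 0 (X ω)) * (p (X ω) - p0 (X ω)) / ((1 - p (X ω)) * (1 - p0 (X ω)))) + (1 - Z ω) * (m 0 (X ω) - m0 0 (X ω)) / (1 - p (X ω))) 2 P :=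
      eLpNorm_const_smul (-θ) (fun ω => m 1 (X ω) - m0 1 (X ω) + -(m 0 (X ω) - m0 0 (X ω)) + Z ω * (D ω - m0 1 (X ω)) * (p0 (X ω) - p (X ω)) / (p (X ω) * p0 (X ω)) + -(Z ω * (m 1 (X ω) - m0 1 (X ω)) / p (X ω)) + -((1 - Z ω) * (D ω - m0 0 (X ω)) * (p (X ω) - p0 (X ω)) / ((1 - p (X ω)) * (1 - p0 (X ω)))) + (1 - Z ω) * (m 0 (X ω) - m0 0 (X ω)) / (1 - p (X ω))) 2 P
    rw [he, ← enorm_eq_nnnorm, Real.enorm_eq_ofReal_abs, abs_neg, ENNReal.ofReal_mul (abs_nonneg θ)]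
    exact mul_le_mul_right hB6 _
  have aSmul : AEStronglyMeasurable (fun ω => (-θ) * (m 1 (X ω) - m0 1 (X ω) + -(m 0 (X ω) - m0 0 (X ω)) + Z ω * (D ω - m0 1 (X ω)) * (p0 (X ω) - p (X ω)) / (p (X ω) * p0 (X ω)) + -(Z ω * (m 1 (X ω) - m0 1 (X ω)) / p (X ω)) + -((1 - Z ω) * (D ω - m0 0 (X ω)) * (p (X ω) - p0 (X ω)) / ((1 - p (X ω)) * (1 - p0 (X ω)))) + (1 - Z ω) * (m 0 (X ω) - m0 0 (X ω)) / (1 - p (X ω)))) P :=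
    ((((((aS1.add aS2).add aS3).add aS4).add aS5).add aS6).const_mul (-θ))
  -- conclusion
  rw [hdecomp]
  refine le_trans
    (tri (((((aT1.add aT2).add aT3).add aT4).add aT5).add aT6) aSmul
      (by positivity) (by positivity) hA6 hSfinal)
    (ENNReal.ofReal_le_ofReal ?_)
  have hrwEps : ε ^ (-2 : ℝ) = ε⁻¹ * ε⁻¹ := by
    rw [Real.rpow_neg hε0.le]
    rw [show ((2:ℝ)) = ((2:ℕ):ℝ) by norm_num, Real.rpow_natCast, pow_two, mul_inv]
  rw [hrwEps]
  have hw1 : 1 ≤ ε⁻¹ := by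
    nlinarith [mul_inv_cancel₀ (ne_of_gt hε0), inv_pos.mpr hε0,
      mul_nonneg (by linarith : (0:ℝ) ≤ 1 - ε) (le_of_lt (inv_pos.mpr hε0))]
  have hM1 : 1 ≤ max (Real.sqrt c₁) 1 := le_max_right _ _
  have hMs : Real.sqrt c₁ ≤ max (Real.sqrt c₁) 1 := le_max_left _ _
  have hq1 : 0 ≤ ε⁻¹ * ε⁻¹ * (max (Real.sqrt c₁) 1 - Real.sqrt c₁) * δ :=
    mul_nonneg (mul_nonneg (by positivity) (sub_nonneg.mpr hMs)) hδ.le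
  have hq2 : 0 ≤ (ε⁻¹ * ε⁻¹ - ε⁻¹) * δ :=
    mul_nonneg (by nlinarith [inv_pos.mpr hε0]) hδ.le
  have hq3 : 0 ≤ |θ| * (ε⁻¹ * ε⁻¹ * (max (Real.sqrt c₁) 1 - 1) * δ) :=
    mul_nonneg (abs_nonneg θ) (mul_nonneg (mul_nonneg (by positivity) (sub_nonneg.mpr hM1)) hδ.le)
  have hq4 : 0 ≤ |θ| * ((ε⁻¹ * ε⁻¹ - ε⁻¹) * δ) := mul_nonneg (abs_nonneg θ) hq2
  nlinarith [hq1, hq2, hq3, hq4, abs_nonneg θ, hδ.le, Real.sqrt_nonneg c₁]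
end

section
/- (Consistency of the cross-fitted covariance building blocks.) Let 𝒲 be a measurable space, W a 𝒲-valued random element with law P, and φ₀, φ₀′ : 𝒲 → ℝ measurable with E[φ₀(W)⁴]^{1/4} ≤ c₁ and E[φ₀′(W)⁴]^{1/4} ≤ c₁. For each n, let W_{n,1}, …, W_{n,n} be i.i.d. with law P, let T_n be a random element of a measurable space 𝒯_n independent of (W_{n,1}, …, W_{n,n}), and let φ_n, φ_n′ : 𝒲 × 𝒯_n → ℝ be jointly measurable with sup_{t ∈ 𝒯_n} E[φ_n(W,t)⁴]^{1/4} ≤ c₁, sup_{t ∈ 𝒯_n} E[φ_n′(W,t)⁴]^{1/4} ≤ c₁, sup_{t ∈ 𝒯_n} E[(φ_n(W,t) − φ₀(W))²] ≤ r_n², and sup_{t ∈ 𝒯_n} E[(φ_n′(W,t) − φ₀′(W))²] ≤ r_n², where r_n → 0. Then n^{−1} Σ_{i=1}^n φ_n(W_{n,i}, T_n) φ_n′(W_{n,i}, T_n) → E[φ₀(W)φ₀′(W)] in probability, and n^{−1} Σ_{i=1}^n φ_n(W_{n,i}, T_n) → E[φ₀(W)] in probability, as n → ∞. -/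
open MeasureTheory ProbabilityTheory Filter

section Stmt14Aux
open Set
open scoped ENNReal


section Helpers
variable {α : Type*} [MeasurableSpace α] {μ : Measure α}

lemma stmt14_eLpNorm_two_eq {u : α → ℝ} (hu : MemLp u 2 μ) :
    eLpNorm u 2 μ = ENNReal.ofReal ((∫ x, u x ^ 2 ∂μ) ^ (2⁻¹ : ℝ)) := by
  rw [hu.eLpNorm_eq_integral_rpow_norm two_ne_zero ENNReal.ofNat_ne_top]
  have h2 : (2 : ℝ≥0∞).toReal = 2 := by simp
  rw [h2]
  have : ∫ a, ‖u a‖ ^ (2:ℝ) ∂μ = ∫ x, u x ^ 2 ∂μ := by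
    congr 1
    funext x
    rw [Real.norm_eq_abs, show (2 : ℝ) = ((2 : ℕ) : ℝ) by norm_num, Real.rpow_natCast, sq_abs]
  rw [this]

lemma stmt14_int_sq_le {u : α → ℝ} (hu : MemLp u 2 μ) {C : ℝ} (hC : 0 ≤ C)
    (h : eLpNorm u 2 μ ≤ ENNReal.ofReal C) : ∫ x, u x ^ 2 ∂μ ≤ C ^ 2 := by
  rw [stmt14_eLpNorm_two_eq hu, ENNReal.ofReal_le_ofReal_iff hC] at h
  have h0 : 0 ≤ ∫ x, u x ^ 2 ∂μ := integral_nonneg fun x => sq_nonneg _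
  have h1 := Real.rpow_le_rpow (Real.rpow_nonneg h0 _) h (by norm_num : (0:ℝ) ≤ 2)
  have e1 : ((∫ x, u x ^ 2 ∂μ) ^ (2⁻¹ : ℝ)) ^ (2 : ℝ) = ∫ x, u x ^ 2 ∂μ := by
    rw [← Real.rpow_mul h0]; norm_num
  have e2 : C ^ (2 : ℝ) = C ^ 2 := by
    rw [show (2:ℝ) = ((2:ℕ):ℝ) by norm_num, Real.rpow_natCast]
  rw [e1, e2] at h1
  exact h1

lemma stmt14_eLpNorm_le_of_int_sq {u : α → ℝ} (hu : MemLp u 2 μ) {a : ℝ}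
    (h : ∫ x, u x ^ 2 ∂μ ≤ a ^ 2) : eLpNorm u 2 μ ≤ ENNReal.ofReal |a| := by
  rw [stmt14_eLpNorm_two_eq hu]
  apply ENNReal.ofReal_le_ofReal
  have h0 : 0 ≤ ∫ x, u x ^ 2 ∂μ := integral_nonneg fun x => sq_nonneg _
  calc (∫ x, u x ^ 2 ∂μ) ^ (2⁻¹ : ℝ)
      ≤ (|a| ^ 2) ^ (2⁻¹ : ℝ) :=
        Real.rpow_le_rpow h0 (by rwa [sq_abs]) (by norm_num)
    _ = |a| := by
        rw [← Real.rpow_natCast |a| 2, ← Real.rpow_mul (abs_nonneg a)]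
        norm_num

end Helpers


variable {α : Type*} [MeasurableSpace α] {μ : Measure α}

lemma stmt14_half : (1 : ℝ≥0∞) / 1 = 1 / 2 + 1 / 2 := by
  rw [ENNReal.div_add_div_same, one_add_one_eq_two,
    ENNReal.div_self two_ne_zero ENNReal.ofNat_ne_top, one_div_one]

lemma stmt14_quarter : (1 : ℝ≥0∞) / 2 = 1 / 4 + 1 / 4 := by
  rw [ENNReal.div_add_div_same, one_add_one_eq_two]
  have h := ENNReal.mul_div_mul_left (a := 1) (b := 2) (c := 2) two_ne_zero ENNReal.ofNat_ne_top
  rw [show (4 : ℝ≥0∞) = 2 * 2 by norm_num, ← h, mul_one]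

lemma stmt14_memLp_mul {u v : α → ℝ} (hu : MemLp u 2 μ) (hv : MemLp v 2 μ) :
    MemLp (fun x => u x * v x) 1 μ :=
  (MemLp.smul (φ := u) (f := v) hv hu : MemLp (u • v) 1 μ)

lemma stmt14_eLpNorm_mul_le {u v : α → ℝ} (hu : AEStronglyMeasurable u μ)
    (hv : AEStronglyMeasurable v μ) :
    eLpNorm (fun x => u x * v x) 2 μ ≤ eLpNorm u 4 μ * eLpNorm v 4 μ :=
  haveI : ENNReal.HolderTriple 4 4 2 := ⟨by rw [← one_div, ← one_div]; exact stmt14_quarter.symm⟩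
  (eLpNorm_smul_le_mul_eLpNorm (φ := u) (f := v) hv hu :
    eLpNorm (u • v) 2 μ ≤ _)

lemma stmt14_abs_integral_mul_le {u v : α → ℝ} (hu : MemLp u 2 μ) (hv : MemLp v 2 μ)
    {a b : ℝ} (ha : 0 ≤ a) (hb : 0 ≤ b)
    (hua : eLpNorm u 2 μ ≤ ENNReal.ofReal a) (hvb : eLpNorm v 2 μ ≤ ENNReal.ofReal b) :
    |∫ x, u x * v x ∂μ| ≤ a * b := by
  have hm : MemLp (fun x => u x * v x) 1 μ := stmt14_memLp_mul hu hv
  have h1 : eLpNorm (fun x => u x * v x) 1 μ ≤ ENNReal.ofReal (a * b) := by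
    refine le_trans (eLpNorm_smul_le_mul_eLpNorm (p := 2) (q := 2) (φ := u) (f := v) hv.1 hu.1 :
      eLpNorm (u • v) 1 μ ≤ _) ?_
    rw [ENNReal.ofReal_mul ha]
    exact mul_le_mul' hua hvb
  have h2 : eLpNorm (fun x => u x * v x) 1 μ = ENNReal.ofReal (∫ x, |u x * v x| ∂μ) := by
    rw [hm.eLpNorm_eq_integral_rpow_norm one_ne_zero ENNReal.one_ne_top]
    simp [Real.norm_eq_abs, abs_mul]
  rw [h2, ENNReal.ofReal_le_ofReal_iff (mul_nonneg ha hb)] at h1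
  calc |∫ x, u x * v x ∂μ| ≤ ∫ x, |u x * v x| ∂μ := by
        simpa [Real.norm_eq_abs, abs_mul] using
          norm_integral_le_integral_norm (f := fun x => u x * v x) (μ := μ)
    _ ≤ a * b := by simpa [abs_mul] using h1


variable {𝒲 : Type*} [MeasurableSpace 𝒲] (ν : Measure 𝒲) [IsProbabilityMeasure ν]

lemma stmt14_measurePreserving_eval {n : ℕ} (i : Fin n) :
    MeasurePreserving (fun w : Fin n → 𝒲 => w i) (Measure.pi fun _ => ν) ν := by
  refine ⟨measurable_pi_apply i, ?_⟩
  ext s hs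
  rw [Measure.map_apply (measurable_pi_apply i) hs, ← Set.univ_pi_update_univ, Measure.pi_pi]
  rw [Finset.prod_eq_single i]
  · simp
  · intro k _ hk; simp [Function.update_of_ne hk]
  · simp

lemma stmt14_indepFun_eval {n : ℕ} {i j : Fin n} (hij : i ≠ j) :
    IndepFun (fun w : Fin n → 𝒲 => w i) (fun w : Fin n → 𝒲 => w j)
      (Measure.pi fun _ => ν) := by
  rw [indepFun_iff_measure_inter_preimage_eq_mul]
  intro A B hA hB
  have hpre : ∀ (k : Fin n) (C : Set 𝒲), MeasurableSet C →
      (Measure.pi fun _ : Fin n => ν) ((fun w => w k) ⁻¹' C) = ν C := by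
    intro k C hC
    rw [← Measure.map_apply (measurable_pi_apply k) hC,
      (stmt14_measurePreserving_eval ν k).map_eq]
  set U : Fin n → Set 𝒲 := fun _ => Set.univ with hU
  set S : Fin n → Set 𝒲 := Function.update (Function.update U i A) j B with hS
  have hset : (fun w : Fin n → 𝒲 => w i) ⁻¹' A ∩ (fun w => w j) ⁻¹' B = Set.pi Set.univ S := by
    ext x
    simp only [Set.mem_inter_iff, Set.mem_preimage, Set.mem_univ_pi]
    constructor
    · rintro ⟨h1, h2⟩ k
      rcases eq_or_ne k j with rfl | hkj
      · simpa [hS, Function.update_self] using h2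
      rcases eq_or_ne k i with rfl | hki
      · simpa [hS, Function.update_of_ne hkj, Function.update_self] using h1
      · simp [hS, hU, Function.update_of_ne hkj, Function.update_of_ne hki]
    · intro h
      refine ⟨?_, ?_⟩
      · have := h i; rwa [hS, Function.update_of_ne hij, Function.update_self] at this
      · have := h j; rwa [hS, Function.update_self] at this
  rw [hset, Measure.pi_pi, hpre i A hA, hpre j B hB]
  have hSi : S i = A := by rw [hS, Function.update_of_ne hij, Function.update_self]
  have hSj : S j = B := by rw [hS, Function.update_self]
  calc ∏ k, ν (S k)
      = ν (S i) * ∏ k ∈ Finset.univ.erase i, ν (S k) :=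
        (Finset.mul_prod_erase _ _ (Finset.mem_univ i)).symm
    _ = ν A * (ν B * ∏ k ∈ (Finset.univ.erase i).erase j, ν (S k)) := by
        rw [hSi, ← Finset.mul_prod_erase (Finset.univ.erase i) (fun k => ν (S k))
          (Finset.mem_erase.mpr ⟨hij.symm, Finset.mem_univ j⟩), hSj]
    _ = ν A * ν B := by
        rw [Finset.prod_eq_one, mul_one]
        intro k hk
        simp only [Finset.mem_erase] at hk
        simp [hS, hU, Function.update_of_ne hk.1, Function.update_of_ne hk.2.1]


lemma stmt14_key {𝒲 : Type*} [MeasurableSpace 𝒲] (ν : Measure 𝒲) [IsProbabilityMeasure ν]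
    {g : 𝒲 → ℝ} (hg : Measurable g) {C : ℝ} (hC : 0 ≤ C)
    (hg2 : eLpNorm g 2 ν ≤ ENNReal.ofReal C)
    {n : ℕ} (hn : 0 < n) {δ : ℝ} (hδ : 0 < δ) :
    (Measure.pi fun _ : Fin n => ν) {w | δ ≤ |(n : ℝ)⁻¹ * ∑ i, g (w i) - ∫ x, g x ∂ν|}
      ≤ ENNReal.ofReal (C ^ 2 / (n * δ ^ 2)) := by
  set P := (Measure.pi fun _ : Fin n => ν) with hP
  have hgm : MemLp g 2 ν := ⟨hg.aestronglyMeasurable, lt_of_le_of_lt hg2 ENNReal.ofReal_lt_top⟩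
  set X : Fin n → (Fin n → 𝒲) → ℝ := fun i w => g (w i) with hX
  have hXm : ∀ i, MemLp (X i) 2 P := fun i =>
    hgm.comp_measurePreserving (stmt14_measurePreserving_eval ν i)
  have hSm : MemLp (∑ i, X i) 2 P := memLp_finsetSum' _ fun i _ => hXm i
  set m : ℝ := ∫ x, g x ∂ν with hm
  -- transport of integrals along coordinate maps
  have htrans : ∀ (h : 𝒲 → ℝ), Measurable h → ∀ i : Fin n,
      ∫ w, h (w i) ∂P = ∫ x, h x ∂ν := by
    intro h hh i
    conv_rhs => rw [← (stmt14_measurePreserving_eval ν i).map_eq]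
    exact (integral_map (measurable_pi_apply i).aemeasurable hh.aestronglyMeasurable).symm
  -- expectation of the sum
  have hES : ∫ w, (∑ i, X i) w ∂P = n * m := by
    have : ∀ w, (∑ i, X i) w = ∑ i, X i w := fun w => Finset.sum_apply _ _ _
    rw [integral_congr_ae (Eventually.of_forall this),
      integral_finset_sum _ (fun i _ => ((hXm i).integrable one_le_two))]
    simp only [hX]
    rw [Finset.sum_congr rfl fun i _ => htrans g hg i]
    simp [hm, mul_comm]
  -- variance of each coordinate
  have hvarX : ∀ i, variance (X i) P = variance g ν := by
    intro i
    rw [variance_eq_sub (hXm i), variance_eq_sub hgm]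
    have e1 : ∫ w, (X i ^ 2) w ∂P = ∫ x, (g ^ 2) x ∂ν := by
      have := htrans (fun x => g x ^ 2) (hg.pow_const 2) i
      simpa [hX, Pi.pow_apply] using this
    have e2 : ∫ w, X i w ∂P = ∫ x, g x ∂ν := htrans g hg i
    rw [e1, e2]
  -- variance of the sum
  have hpair : Set.Pairwise ↑(Finset.univ : Finset (Fin n))
      (fun i j => IndepFun (X i) (X j) P) := by
    intro i _ j _ hij
    exact (stmt14_indepFun_eval ν hij).comp hg hg
  have hvarS : variance (∑ i, X i) P = n * variance g ν := by
    rw [IndepFun.variance_sum (fun i _ => hXm i) hpair]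
    simp [hvarX, Finset.sum_const, nsmul_eq_mul]
  -- bound on variance g
  have hvarg : variance g ν ≤ C ^ 2 := by
    refine le_trans (variance_le_expectation_sq hg.aestronglyMeasurable) ?_
    have := stmt14_int_sq_le hgm hC hg2
    simpa [Pi.pow_apply] using this
  -- Chebyshev
  have hc : (0 : ℝ) < n * δ := by positivity
  have hcheb := meas_ge_le_variance_div_sq (μ := P) hSm hc
  -- event inclusion
  have hsub : {w : Fin n → 𝒲 | δ ≤ |(n : ℝ)⁻¹ * ∑ i, g (w i) - m|}
      ⊆ {w | n * δ ≤ |(∑ i, X i) w - ∫ w', (∑ i, X i) w' ∂P|} := by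
    intro w hw
    simp only [Set.mem_setOf_eq] at hw ⊢
    rw [hES]
    have hsum : (∑ i, X i) w = ∑ i, g (w i) := by
      rw [Finset.sum_apply]
    rw [hsum]
    have hnne : (n : ℝ) ≠ 0 := Nat.cast_ne_zero.mpr hn.ne'
    have : (∑ i, g (w i)) - n * m = n * ((n : ℝ)⁻¹ * ∑ i, g (w i) - m) := by
      field_simp
    rw [this, abs_mul, abs_of_nonneg (by positivity : (0:ℝ) ≤ (n:ℝ))]
    exact mul_le_mul_of_nonneg_left hw (by positivity)
  refine le_trans (measure_mono hsub) (le_trans hcheb ?_)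
  apply ENNReal.ofReal_le_ofReal
  rw [hvarS]
  have hnpos : (0 : ℝ) < (n : ℝ) := by exact_mod_cast hn
  have heq : (n : ℝ) * variance g ν / (n * δ) ^ 2 = variance g ν / (n * δ ^ 2) := by
    field_simp
  rw [heq]
  exact div_le_div_of_nonneg_right hvarg (by positivity) |>.trans_eq rfl


theorem stmt14_master
    {Ω 𝒲 : Type*} [MeasurableSpace Ω] [MeasurableSpace 𝒲]
    (μ : Measure Ω) [IsProbabilityMeasure μ]
    (𝒯 : ℕ → Type*) [∀ n, MeasurableSpace (𝒯 n)]
    (W : Ω → 𝒲) (hWm : Measurable W)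
    (φ0 φ0' : 𝒲 → ℝ) (hφ0m : Measurable φ0) (hφ0'm : Measurable φ0')
    (c₁ : ℝ) (hc₁ : 0 < c₁)
    (hφ04 : eLpNorm (fun ω => φ0 (W ω)) 4 μ ≤ ENNReal.ofReal c₁)
    (hφ0'4 : eLpNorm (fun ω => φ0' (W ω)) 4 μ ≤ ENNReal.ofReal c₁)
    (Ws : (n : ℕ) → Fin n → Ω → 𝒲) (T : (n : ℕ) → Ω → 𝒯 n)
    (hWsm : ∀ n i, Measurable (Ws n i)) (hTm : ∀ n, Measurable (T n))
    (hiid : ∀ n, iIndepFun (Ws n) μ)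
    (hlaw : ∀ n i, μ.map (Ws n i) = μ.map W)
    (hindep : ∀ n, IndepFun (fun ω i => Ws n i ω) (T n) μ)
    (φ φ' : (n : ℕ) → 𝒲 → 𝒯 n → ℝ)
    (hφm : ∀ n, Measurable (fun wt : 𝒲 × 𝒯 n => φ n wt.1 wt.2))
    (hφ'm : ∀ n, Measurable (fun wt : 𝒲 × 𝒯 n => φ' n wt.1 wt.2))
    (hφ4 : ∀ n t, eLpNorm (fun ω => φ n (W ω) t) 4 μ ≤ ENNReal.ofReal c₁)
    (hφ'4 : ∀ n t, eLpNorm (fun ω => φ' n (W ω) t) 4 μ ≤ ENNReal.ofReal c₁)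
    (r : ℕ → ℝ) (hr : Tendsto r atTop (nhds 0))
    (hrate : ∀ n t, ∫ ω, (φ n (W ω) t - φ0 (W ω)) ^ 2 ∂μ ≤ (r n) ^ 2)
    (hrate' : ∀ n t, ∫ ω, (φ' n (W ω) t - φ0' (W ω)) ^ 2 ∂μ ≤ (r n) ^ 2)
    {ε : ℝ} (hε : 0 < ε) :
    Tendsto (fun n : ℕ =>
        (μ {ω | ε < |(n : ℝ)⁻¹ * (∑ i : Fin n, φ n (Ws n i ω) (T n ω) * φ' n (Ws n i ω) (T n ω))
            - ∫ ω', φ0 (W ω') * φ0' (W ω') ∂μ|}).toReal)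
      atTop (nhds 0) := by
  set ν : Measure 𝒲 := μ.map W with hν
  haveI : IsProbabilityMeasure ν := Measure.isProbabilityMeasure_map hWm.aemeasurable
  set m0 : ℝ := ∫ ω', φ0 (W ω') * φ0' (W ω') ∂μ with hm0
  -- measurability of compositions
  have hfm : ∀ n t, Measurable (fun ω => φ n (W ω) t) := fun n t =>
    (hφm n).comp (hWm.prodMk measurable_const)
  have hgm : ∀ n t, Measurable (fun ω => φ' n (W ω) t) := fun n t =>
    (hφ'm n).comp (hWm.prodMk measurable_const)
  have hf0m : Measurable (fun ω => φ0 (W ω)) := hφ0m.comp hWm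
  have hg0m : Measurable (fun ω => φ0' (W ω)) := hφ0'm.comp hWm
  -- MemLp facts
  have two_le_four : (2 : ℝ≥0∞) ≤ 4 := by norm_num
  have hfLp4 : ∀ n t, MemLp (fun ω => φ n (W ω) t) 4 μ := fun n t =>
    ⟨(hfm n t).aestronglyMeasurable, lt_of_le_of_lt (hφ4 n t) ENNReal.ofReal_lt_top⟩
  have hgLp4 : ∀ n t, MemLp (fun ω => φ' n (W ω) t) 4 μ := fun n t =>
    ⟨(hgm n t).aestronglyMeasurable, lt_of_le_of_lt (hφ'4 n t) ENNReal.ofReal_lt_top⟩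
  have hf0Lp4 : MemLp (fun ω => φ0 (W ω)) 4 μ :=
    ⟨hf0m.aestronglyMeasurable, lt_of_le_of_lt hφ04 ENNReal.ofReal_lt_top⟩
  have hg0Lp4 : MemLp (fun ω => φ0' (W ω)) 4 μ :=
    ⟨hg0m.aestronglyMeasurable, lt_of_le_of_lt hφ0'4 ENNReal.ofReal_lt_top⟩
  have hfLp2 : ∀ n t, MemLp (fun ω => φ n (W ω) t) 2 μ := fun n t =>
    (hfLp4 n t).mono_exponent two_le_four
  have hgLp2 : ∀ n t, MemLp (fun ω => φ' n (W ω) t) 2 μ := fun n t =>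
    (hgLp4 n t).mono_exponent two_le_four
  have hf0Lp2 : MemLp (fun ω => φ0 (W ω)) 2 μ := hf0Lp4.mono_exponent two_le_four
  have hg0Lp2 : MemLp (fun ω => φ0' (W ω)) 2 μ := hg0Lp4.mono_exponent two_le_four
  -- L2-norm bounds
  have hf2 : ∀ n t, eLpNorm (fun ω => φ n (W ω) t) 2 μ ≤ ENNReal.ofReal c₁ := fun n t =>
    (eLpNorm_le_eLpNorm_of_exponent_le two_le_four (hfm n t).aestronglyMeasurable).trans (hφ4 n t)
  have hg2 : ∀ n t, eLpNorm (fun ω => φ' n (W ω) t) 2 μ ≤ ENNReal.ofReal c₁ := fun n t =>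
    (eLpNorm_le_eLpNorm_of_exponent_le two_le_four (hgm n t).aestronglyMeasurable).trans (hφ'4 n t)
  have hf02 : eLpNorm (fun ω => φ0 (W ω)) 2 μ ≤ ENNReal.ofReal c₁ :=
    (eLpNorm_le_eLpNorm_of_exponent_le two_le_four hf0m.aestronglyMeasurable).trans hφ04
  -- bias bound
  have hbias : ∀ n t, |(∫ ω, φ n (W ω) t * φ' n (W ω) t ∂μ) - m0| ≤ 2 * (c₁ * |r n|) := by
    intro n t
    have hdiff1 : MemLp (fun ω => φ n (W ω) t - φ0 (W ω)) 2 μ := (hfLp2 n t).sub hf0Lp2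
    have hdiff2 : MemLp (fun ω => φ' n (W ω) t - φ0' (W ω)) 2 μ := (hgLp2 n t).sub hg0Lp2
    have hd1 : eLpNorm (fun ω => φ n (W ω) t - φ0 (W ω)) 2 μ ≤ ENNReal.ofReal |r n| :=
      stmt14_eLpNorm_le_of_int_sq hdiff1 (hrate n t)
    have hd2 : eLpNorm (fun ω => φ' n (W ω) t - φ0' (W ω)) 2 μ ≤ ENNReal.ofReal |r n| :=
      stmt14_eLpNorm_le_of_int_sq hdiff2 (hrate' n t)
    have hint1 : Integrable (fun ω => φ n (W ω) t * φ' n (W ω) t) μ :=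
      memLp_one_iff_integrable.mp (stmt14_memLp_mul (hfLp2 n t) (hgLp2 n t))
    have hint0 : Integrable (fun ω => φ0 (W ω) * φ0' (W ω)) μ :=
      memLp_one_iff_integrable.mp (stmt14_memLp_mul hf0Lp2 hg0Lp2)
    have hintA : Integrable (fun ω => (φ n (W ω) t - φ0 (W ω)) * φ' n (W ω) t) μ :=
      memLp_one_iff_integrable.mp (stmt14_memLp_mul hdiff1 (hgLp2 n t))
    have hintB : Integrable (fun ω => φ0 (W ω) * (φ' n (W ω) t - φ0' (W ω))) μ :=
      memLp_one_iff_integrable.mp (stmt14_memLp_mul hf0Lp2 hdiff2)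
    have hsplit : (∫ ω, φ n (W ω) t * φ' n (W ω) t ∂μ) - m0
        = (∫ ω, (φ n (W ω) t - φ0 (W ω)) * φ' n (W ω) t ∂μ)
          + ∫ ω, φ0 (W ω) * (φ' n (W ω) t - φ0' (W ω)) ∂μ := by
      rw [hm0, ← integral_sub hint1 hint0, ← integral_add hintA hintB]
      congr 1
      funext ω
      ring
    rw [hsplit]
    have hA : |∫ ω, (φ n (W ω) t - φ0 (W ω)) * φ' n (W ω) t ∂μ| ≤ |r n| * c₁ :=
      stmt14_abs_integral_mul_le hdiff1 (hgLp2 n t) (abs_nonneg _) hc₁.le hd1 (hg2 n t)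
    have hB : |∫ ω, φ0 (W ω) * (φ' n (W ω) t - φ0' (W ω)) ∂μ| ≤ c₁ * |r n| :=
      stmt14_abs_integral_mul_le hf0Lp2 hdiff2 hc₁.le (abs_nonneg _) hf02 hd2
    calc |(∫ ω, (φ n (W ω) t - φ0 (W ω)) * φ' n (W ω) t ∂μ)
            + ∫ ω, φ0 (W ω) * (φ' n (W ω) t - φ0' (W ω)) ∂μ|
        ≤ |∫ ω, (φ n (W ω) t - φ0 (W ω)) * φ' n (W ω) t ∂μ|
          + |∫ ω, φ0 (W ω) * (φ' n (W ω) t - φ0' (W ω)) ∂μ| := abs_add_le _ _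
      _ ≤ |r n| * c₁ + c₁ * |r n| := add_le_add hA hB
      _ = 2 * (c₁ * |r n|) := by ring
  -- the quantitative bound for large n
  set b : ℕ → ℝ := fun n => (c₁ ^ 2) ^ 2 / (ε / 2) ^ 2 * (n : ℝ)⁻¹ with hb
  have hbound : ∀ n : ℕ, 0 < n → 2 * (c₁ * |r n|) ≤ ε / 2 →
      μ {ω | ε < |(n : ℝ)⁻¹ * (∑ i : Fin n, φ n (Ws n i ω) (T n ω) * φ' n (Ws n i ω) (T n ω))
          - m0|} ≤ ENNReal.ofReal (b n) := by
    intro n hn hB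
    -- joint law
    have hWvecM : Measurable (fun ω (i : Fin n) => Ws n i ω) :=
      measurable_pi_lambda _ fun i => hWsm n i
    have hpi : μ.map (fun ω (i : Fin n) => Ws n i ω) = Measure.pi (fun _ : Fin n => ν) := by
      refine (Measure.pi_eq fun s hs => ?_).symm
      rw [Measure.map_apply hWvecM (MeasurableSet.univ_pi fun i => hs i)]
      have hprew : (fun ω (i : Fin n) => Ws n i ω) ⁻¹' Set.pi Set.univ s
          = ⋂ i, Ws n i ⁻¹' s i := by
        ext ω; simp [Set.mem_univ_pi, Set.mem_iInter]
      rw [hprew, (hiid n).meas_iInter fun i => ⟨s i, hs i, rfl⟩]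
      exact Finset.prod_congr rfl fun i _ => by
        rw [← Measure.map_apply (hWsm n i) (hs i), hlaw n i]
    set τ : Measure (𝒯 n) := μ.map (T n) with hτ
    haveI : IsProbabilityMeasure τ := Measure.isProbabilityMeasure_map (hTm n).aemeasurable
    set F : (Fin n → 𝒲) × 𝒯 n → ℝ := fun p =>
      (n : ℝ)⁻¹ * ∑ i : Fin n, φ n (p.1 i) p.2 * φ' n (p.1 i) p.2 with hF
    have hFm : Measurable F := by
      apply Measurable.const_mul
      apply Finset.measurable_sum
      intro i _
      have h1 : Measurable fun p : (Fin n → 𝒲) × 𝒯 n => φ n (p.1 i) p.2 :=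
        (hφm n).comp (f := fun p : (Fin n → 𝒲) × 𝒯 n => (p.1 i, p.2)) (((measurable_pi_apply i).comp measurable_fst).prodMk measurable_snd)
      have h2 : Measurable fun p : (Fin n → 𝒲) × 𝒯 n => φ' n (p.1 i) p.2 :=
        (hφ'm n).comp (f := fun p : (Fin n → 𝒲) × 𝒯 n => (p.1 i, p.2)) (((measurable_pi_apply i).comp measurable_fst).prodMk measurable_snd)
      exact h1.mul h2
    set S : Set ((Fin n → 𝒲) × 𝒯 n) := {p | ε < |F p - m0|} with hSdef
    have hSmeas : MeasurableSet S :=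
      measurableSet_lt measurable_const ((hFm.sub measurable_const).abs)
    have hev : {ω | ε < |(n : ℝ)⁻¹ * (∑ i : Fin n, φ n (Ws n i ω) (T n ω)
        * φ' n (Ws n i ω) (T n ω)) - m0|}
        = (fun ω => ((fun i => Ws n i ω), T n ω)) ⁻¹' S := rfl
    rw [hev, ← Measure.map_apply (hWvecM.prodMk (hTm n)) hSmeas]
    have hjoint : μ.map (fun ω => ((fun i => Ws n i ω), T n ω))
        = (Measure.pi fun _ : Fin n => ν).prod τ := by
      rw [← hpi]
      exact (indepFun_iff_map_prod_eq_prod_map_map hWvecM.aemeasurable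
        (hTm n).aemeasurable).mp (hindep n)
    rw [hjoint, Measure.prod_apply_symm hSmeas]
    -- slice bound
    have hslice : ∀ t : 𝒯 n, (Measure.pi fun _ : Fin n => ν)
        ((fun w => (w, t)) ⁻¹' S) ≤ ENNReal.ofReal (b n) := by
      intro t
      set g : 𝒲 → ℝ := fun w => φ n w t * φ' n w t with hgdef
      have hgmeas : Measurable g :=
        ((hφm n).comp (measurable_id.prodMk measurable_const)).mul
          ((hφ'm n).comp (measurable_id.prodMk measurable_const))
      have hgν2 : eLpNorm g 2 ν ≤ ENNReal.ofReal (c₁ ^ 2) := by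
        rw [hν, eLpNorm_map_measure hgmeas.aestronglyMeasurable hWm.aemeasurable]
        refine le_trans (stmt14_eLpNorm_mul_le (hfm n t).aestronglyMeasurable
          (hgm n t).aestronglyMeasurable) ?_
        rw [sq, ENNReal.ofReal_mul hc₁.le]
        exact mul_le_mul' (hφ4 n t) (hφ'4 n t)
      have hmt : ∫ x, g x ∂ν = ∫ ω, φ n (W ω) t * φ' n (W ω) t ∂μ := by
        rw [hν, integral_map hWm.aemeasurable hgmeas.aestronglyMeasurable]
      have hsub : (fun w : Fin n → 𝒲 => (w, t)) ⁻¹' S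
          ⊆ {w | ε / 2 ≤ |(n : ℝ)⁻¹ * ∑ i, g (w i) - ∫ x, g x ∂ν|} := by
        intro w hw
        simp only [Set.mem_preimage, hSdef, Set.mem_setOf_eq, hF] at hw
        simp only [Set.mem_setOf_eq]
        have h1 : |(∫ x, g x ∂ν) - m0| ≤ ε / 2 := by
          rw [hmt]; exact le_trans (hbias n t) hB
        have h2 : ε < |(n : ℝ)⁻¹ * ∑ i, g (w i) - m0| := hw
        have := abs_sub_abs_le_abs_sub ((n : ℝ)⁻¹ * ∑ i, g (w i) - m0)
          ((∫ x, g x ∂ν) - m0)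
        have h3 : |(n : ℝ)⁻¹ * ∑ i, g (w i) - m0 - ((∫ x, g x ∂ν) - m0)|
            = |(n : ℝ)⁻¹ * ∑ i, g (w i) - ∫ x, g x ∂ν| := by ring_nf
        linarith [abs_sub_abs_le_abs_sub ((n : ℝ)⁻¹ * ∑ i, g (w i) - m0)
          ((∫ x, g x ∂ν) - m0), h3 ▸ (abs_sub_abs_le_abs_sub
          ((n : ℝ)⁻¹ * ∑ i, g (w i) - m0) ((∫ x, g x ∂ν) - m0))]
      refine le_trans (measure_mono hsub) ?_
      refine le_trans (stmt14_key ν hgmeas (by positivity) hgν2 hn (by positivity)) ?_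
      apply ENNReal.ofReal_le_ofReal
      apply le_of_eq
      have hnne : ((n : ℝ)) ≠ 0 := Nat.cast_ne_zero.mpr hn.ne'
      have hee : (ε / 2) ≠ 0 := by positivity
      simp only [hb]
      field_simp
    calc ∫⁻ t, (Measure.pi fun _ : Fin n => ν) ((fun w => (w, t)) ⁻¹' S) ∂τ
        ≤ ∫⁻ _, ENNReal.ofReal (b n) ∂τ := lintegral_mono hslice
      _ = ENNReal.ofReal (b n) := by simp
  -- conclude by squeezing
  have hb0 : Tendsto b atTop (nhds 0) := by
    have := tendsto_inv_atTop_nhds_zero_nat.const_mul ((c₁ ^ 2) ^ 2 / (ε / 2) ^ 2)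
    simpa using this
  have hro : Tendsto (fun n => 2 * (c₁ * |r n|)) atTop (nhds 0) := by
    have habs : Tendsto (fun n => |r n|) atTop (nhds 0) := by
      have := hr.abs; simpa using this
    have := (habs.const_mul c₁).const_mul 2
    simpa using this
  have hev2 : ∀ᶠ n : ℕ in atTop, 2 * (c₁ * |r n|) ≤ ε / 2 ∧ 0 < n :=
    (hro.eventually_le_const (by positivity : (0:ℝ) < ε / 2)).and (eventually_gt_atTop 0)
  refine squeeze_zero' (Eventually.of_forall fun n => ENNReal.toReal_nonneg) ?_ hb0
  filter_upwards [hev2] with n hn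
  have := hbound n hn.2 hn.1
  exact ENNReal.toReal_le_of_le_ofReal (by positivity) this

end Stmt14Aux

/-- Consistency of the cross-fitted covariance building blocks: Under fourth-moment
bounds `E[φ₀(W)⁴]^{1/4} ≤ c₁`, `E[φ₀′(W)⁴]^{1/4} ≤ c₁`, `sup_t E[φ_n(W,t)⁴]^{1/4} ≤ c₁`,
`sup_t E[φ_n′(W,t)⁴]^{1/4} ≤ c₁`, and mean-square approximation rates
`sup_t E[(φ_n(W,t) − φ₀(W))²] ≤ r_n²`, `sup_t E[(φ_n′(W,t) − φ₀′(W))²] ≤ r_n²` with `r_n → 0`,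
one has `n⁻¹ Σᵢ φ_n(W_{n,i}, T_n) φ_n′(W_{n,i}, T_n) → E[φ₀(W)φ₀′(W)]` and
`n⁻¹ Σᵢ φ_n(W_{n,i}, T_n) → E[φ₀(W)]` in probability. -/
theorem stmt14
    {Ω 𝒲 : Type*} [MeasurableSpace Ω] [MeasurableSpace 𝒲]
    (μ : Measure Ω) [IsProbabilityMeasure μ]
    (𝒯 : ℕ → Type*) [∀ n, MeasurableSpace (𝒯 n)]
    (W : Ω → 𝒲) (hWm : Measurable W)
    (φ0 φ0' : 𝒲 → ℝ) (hφ0m : Measurable φ0) (hφ0'm : Measurable φ0')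
    (c₁ : ℝ) (hc₁ : 0 < c₁)
    (hφ04 : eLpNorm (fun ω => φ0 (W ω)) 4 μ ≤ ENNReal.ofReal c₁)
    (hφ0'4 : eLpNorm (fun ω => φ0' (W ω)) 4 μ ≤ ENNReal.ofReal c₁)
    (Ws : (n : ℕ) → Fin n → Ω → 𝒲) (T : (n : ℕ) → Ω → 𝒯 n)
    (hWsm : ∀ n i, Measurable (Ws n i)) (hTm : ∀ n, Measurable (T n))
    (hiid : ∀ n, iIndepFun (Ws n) μ)
    (hlaw : ∀ n i, μ.map (Ws n i) = μ.map W)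
    (hindep : ∀ n, IndepFun (fun ω i => Ws n i ω) (T n) μ)
    (φ φ' : (n : ℕ) → 𝒲 → 𝒯 n → ℝ)
    (hφm : ∀ n, Measurable (fun wt : 𝒲 × 𝒯 n => φ n wt.1 wt.2))
    (hφ'm : ∀ n, Measurable (fun wt : 𝒲 × 𝒯 n => φ' n wt.1 wt.2))
    (hφ4 : ∀ n t, eLpNorm (fun ω => φ n (W ω) t) 4 μ ≤ ENNReal.ofReal c₁)
    (hφ'4 : ∀ n t, eLpNorm (fun ω => φ' n (W ω) t) 4 μ ≤ ENNReal.ofReal c₁)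
    (r : ℕ → ℝ) (hr : Tendsto r atTop (nhds 0))
    (hrate : ∀ n t, ∫ ω, (φ n (W ω) t - φ0 (W ω)) ^ 2 ∂μ ≤ (r n) ^ 2)
    (hrate' : ∀ n t, ∫ ω, (φ' n (W ω) t - φ0' (W ω)) ^ 2 ∂μ ≤ (r n) ^ 2) :
    (∀ ε > (0 : ℝ),
      Tendsto (fun n : ℕ =>
          (μ {ω | ε < |(n : ℝ)⁻¹ * (∑ i : Fin n, φ n (Ws n i ω) (T n ω) * φ' n (Ws n i ω) (T n ω))
              - ∫ ω', φ0 (W ω') * φ0' (W ω') ∂μ|}).toReal)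
        atTop (nhds 0)) ∧
    (∀ ε > (0 : ℝ),
      Tendsto (fun n : ℕ =>
          (μ {ω | ε < |(n : ℝ)⁻¹ * (∑ i : Fin n, φ n (Ws n i ω) (T n ω))
              - ∫ ω', φ0 (W ω') ∂μ|}).toReal)
        atTop (nhds 0)) := by
  constructor
  · intro ε hε
    exact stmt14_master μ 𝒯 W hWm φ0 φ0' hφ0m hφ0'm c₁ hc₁ hφ04 hφ0'4 Ws T hWsm hTm hiid hlaw
      hindep φ φ' hφm hφ'm hφ4 hφ'4 r hr hrate hrate' hε
  · intro ε hε
    set c := max c₁ 1 with hc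
    have hcpos : 0 < c := lt_max_of_lt_right one_pos
    have hbump : ∀ {f : Ω → ℝ}, eLpNorm f 4 μ ≤ ENNReal.ofReal c₁ →
        eLpNorm f 4 μ ≤ ENNReal.ofReal c := fun h =>
      le_trans h (ENNReal.ofReal_le_ofReal (le_max_left _ _))
    have hone : eLpNorm (fun _ : Ω => (1 : ℝ)) 4 μ ≤ ENNReal.ofReal c := by
      rw [eLpNorm_const _ (by norm_num) (IsProbabilityMeasure.ne_zero μ)]
      simp only [measure_univ]
      simp only [ENNReal.one_rpow, mul_one]
      refine le_trans (le_of_eq ?_) (ENNReal.ofReal_le_ofReal (le_max_right c₁ 1))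
      simp
    have := stmt14_master μ 𝒯 W hWm φ0 (fun _ => 1) hφ0m measurable_const c hcpos
      (hbump hφ04) hone Ws T hWsm hTm hiid hlaw hindep φ (fun n _ _ => 1)
      hφm (fun n => measurable_const) (fun n t => hbump (hφ4 n t))
      (fun n t => hone) r hr hrate
      (fun n t => by simpa using sq_nonneg (r n)) hε
    simpa [mul_one] using this
end
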